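/- Let G be a triangle-free finite simple graph of diameter 3 whose complement also has diameter 3, let S be an independent cut set of G, and suppose u, v are vertices with distance exactly 3 in the complement of G. Then at least one of u, v belongs to S. -/

import Mathlib

/-- `G` triangle-free with `diam(G) = diam(Gᶜ) = 3`, `S` an
independent cut set of `G`, and `u, v` at distance exactly 3 in `Gᶜ`. Then at
least one of `u, v` lies in `S`. -/
theorem stmt16 {V : Type*} [Fintype V] (G : SimpleGraph V)
    (htf : G.CliqueFree 3) (hdiam : G.diam = 3) (hdiamc : Gᶜ.diam = 3)
    (S : Set V) (hcut : ¬ (G.induce (Sᶜ : Set V)).Connected)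
    (hind : ∀ a ∈ S, ∀ b ∈ S, ¬ G.Adj a b)
    (u v : V) (huv : Gᶜ.dist u v = 3) :
    u ∈ S ∨ v ∈ S := by
  by_contra h
  push_neg at h
  obtain ⟨hu, hv⟩ := h
  have hu' : u ∈ (Sᶜ : Set V) := hu
  have hv' : v ∈ (Sᶜ : Set V) := hv
  set U : ↥(Sᶜ : Set V) := ⟨u, hu'⟩ with hU
  set W : ↥(Sᶜ : Set V) := ⟨v, hv'⟩ with hW
  -- key: non-reachability in the induced graph gives adjacency in the complement
  have key : ∀ a b : ↥(Sᶜ : Set V), ¬ (G.induce (Sᶜ : Set V)).Reachable a b →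
      Gᶜ.Adj a.1 b.1 := by
    intro a b hr
    have hne : a.1 ≠ b.1 := by
      intro e
      apply hr
      have : a = b := Subtype.ext e
      rw [this]
    refine ⟨hne, fun hadj => hr ?_⟩
    have hadj' : (G.induce (Sᶜ : Set V)).Adj a b := hadj
    exact hadj'.reachable
  rw [SimpleGraph.connected_iff] at hcut
  push_neg at hcut
  have hpre : ¬ (G.induce (Sᶜ : Set V)).Preconnected := fun hp => (hcut hp).elim' U
  simp only [SimpleGraph.Preconnected, not_forall] at hpre
  obtain ⟨a, b, hab⟩ := hpre
  -- choose w not reachable from U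
  have hex : ∃ w : ↥(Sᶜ : Set V), ¬ (G.induce (Sᶜ : Set V)).Reachable U w := by
    by_cases hUa : (G.induce (Sᶜ : Set V)).Reachable U a
    · exact ⟨b, fun hUb => hab (hUa.symm.trans hUb)⟩
    · exact ⟨a, hUa⟩
  obtain ⟨w, hw⟩ := hex
  by_cases hUV : (G.induce (Sᶜ : Set V)).Reachable U W
  · have hwv : ¬ (G.induce (Sᶜ : Set V)).Reachable W w := fun hWw => hw (hUV.trans hWw)
    have h1 : Gᶜ.Adj u w.1 := key U w hw
    have h2 : Gᶜ.Adj v w.1 := key W w hwv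
    have hd : Gᶜ.dist u v ≤ 2 := by
      have := SimpleGraph.dist_le (SimpleGraph.Walk.cons h1
        (SimpleGraph.Walk.cons h2.symm SimpleGraph.Walk.nil))
      simpa using this
    omega
  · have h1 : Gᶜ.Adj u v := key U W hUV
    have hd : Gᶜ.dist u v ≤ 1 := by
      have := SimpleGraph.dist_le (SimpleGraph.Walk.cons h1 SimpleGraph.Walk.nil)
      simpa using this
    omega
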